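/- For every real y with \(|y| \ge 100\), the derivative of the stable self-similar Burgers profile satisfies \(-\tfrac{7}{20}\,|y|^{-2/3} \le \overline{W}'(y) \le -\tfrac{1}{4}\,|y|^{-2/3}\). -/

import Mathlib

/-- The stable self-similar Burgers profile. -/
noncomputable def burgersW (y : ℝ) : ℝ :=
  (-(y / 2) + Real.sqrt (1 / 27 + y ^ 2 / 4)) ^ ((1 : ℝ) / 3)
    - (y / 2 + Real.sqrt (1 / 27 + y ^ 2 / 4)) ^ ((1 : ℝ) / 3)

lemma burgersKey (α s y : ℝ) (hα : 0 < α) (hs : 0 < s)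
    (h1 : α ^ 3 = -(y / 2) + s) (h2 : (1 / (3 * α)) ^ 3 = y / 2 + s) :
    -1 / (1 + 3 * (α - 1 / (3 * α)) ^ 2) =
      (-(1 / 2) + y / 2 / (2 * s)) * ((1:ℝ) / 3) * (α ^ 2)⁻¹
        - (1 / 2 + y / 2 / (2 * s)) * ((1:ℝ) / 3) * ((1 / (3 * α)) ^ 2)⁻¹ := by
  have e1 : y = (1 / (3 * α)) ^ 3 - α ^ 3 := by rw [h1, h2]; ring
  have e2 : s = (α ^ 3 + (1 / (3 * α)) ^ 3) / 2 := by rw [h1, h2]; ring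
  rw [e1, e2]
  have hd : (1 + 3 * (α - 1 / (3 * α)) ^ 2) ≠ 0 := by positivity
  have h2' : α ≠ 0 := hα.ne'
  have h3 : (α ^ 3 + 1 / (27 * α ^ 3)) ≠ 0 := by positivity
  field_simp
  ring

lemma burgersW_hasDerivAt (y : ℝ) :
    HasDerivAt burgersW (-1 / (1 + 3 * (burgersW y) ^ 2)) y := by
  set s := Real.sqrt (1 / 27 + y ^ 2 / 4) with hsdef
  have hin : (0:ℝ) < 1 / 27 + y ^ 2 / 4 := by positivity
  have hs0 : 0 < s := Real.sqrt_pos.mpr hin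
  have hs2 : s ^ 2 = 1 / 27 + y ^ 2 / 4 := Real.sq_sqrt hin.le
  have ha : 0 < -(y / 2) + s := by nlinarith
  have hb : 0 < y / 2 + s := by nlinarith
  have hinner : HasDerivAt (fun y : ℝ => 1 / 27 + y ^ 2 / 4) (y / 2) y := by
    have := ((hasDerivAt_pow 2 y).div_const 4).const_add (1/27 : ℝ)
    simpa using this.congr_deriv (by ring)
  have hsder : HasDerivAt (fun y : ℝ => Real.sqrt (1 / 27 + y ^ 2 / 4)) (y / 2 / (2 * s)) y :=
    hinner.sqrt (by positivity)
  have haf : HasDerivAt (fun y : ℝ => -(y / 2) + Real.sqrt (1 / 27 + y ^ 2 / 4))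
      (-(1/2) + y / 2 / (2 * s)) y :=
    ((hasDerivAt_id y).div_const 2).neg.add hsder |>.congr_deriv (by ring)
  have hbf : HasDerivAt (fun y : ℝ => y / 2 + Real.sqrt (1 / 27 + y ^ 2 / 4))
      ((1/2) + y / 2 / (2 * s)) y :=
    ((hasDerivAt_id y).div_const 2).add hsder |>.congr_deriv (by ring)
  have hA := haf.rpow_const (p := (1:ℝ)/3) (Or.inl ha.ne')
  have hB := hbf.rpow_const (p := (1:ℝ)/3) (Or.inl hb.ne')
  have hW := hA.sub hB
  convert hW using 1
  case e'_4 => rfl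
  case e'_5 => rfl
  case e'_8 => rfl
  -- now the value identity
  set α := (-(y / 2) + s) ^ ((1:ℝ)/3) with hαdef
  set β := (y / 2 + s) ^ ((1:ℝ)/3) with hβdef
  have hα0 : 0 < α := Real.rpow_pos_of_pos ha _
  have hβ0 : 0 < β := Real.rpow_pos_of_pos hb _
  have hα3 : α ^ 3 = -(y / 2) + s := by
    rw [hαdef, ← Real.rpow_natCast ((-(y / 2) + s) ^ ((1:ℝ)/3)) 3, ← Real.rpow_mul ha.le]
    norm_num
  have hβ3 : β ^ 3 = y / 2 + s := by
    rw [hβdef, ← Real.rpow_natCast ((y / 2 + s) ^ ((1:ℝ)/3)) 3, ← Real.rpow_mul hb.le]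
    norm_num
  have hab : (-(y / 2) + s) * (y / 2 + s) = 1 / 27 := by nlinarith
  have hαβ : α * β = 1 / 3 := by
    rw [hαdef, hβdef, ← Real.mul_rpow ha.le hb.le, hab,
      show (1:ℝ)/27 = ((1:ℝ)/3) ^ (3:ℕ) by norm_num,
      ← Real.rpow_natCast ((1:ℝ)/3) 3, ← Real.rpow_mul (by norm_num)]
    norm_num
  have hβv : β = 1 / (3 * α) := by
    field_simp
    linarith [hαβ]
  have hWv : burgersW y = α - β := rfl
  have ha23 : (-(y / 2) + s) ^ ((1:ℝ)/3 - 1) = (α ^ 2)⁻¹ := by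
    have h1 : α ^ 2 = (-(y / 2) + s) ^ ((2:ℝ)/3) := by
      rw [hαdef, ← Real.rpow_natCast ((-(y / 2) + s) ^ ((1:ℝ)/3)) 2, ← Real.rpow_mul ha.le]
      norm_num
    rw [h1, ← Real.rpow_neg ha.le]
    norm_num
  have hb23 : (y / 2 + s) ^ ((1:ℝ)/3 - 1) = (β ^ 2)⁻¹ := by
    have h1 : β ^ 2 = (y / 2 + s) ^ ((2:ℝ)/3) := by
      rw [hβdef, ← Real.rpow_natCast ((y / 2 + s) ^ ((1:ℝ)/3)) 2, ← Real.rpow_mul hb.le]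
      norm_num
    rw [h1, ← Real.rpow_neg hb.le]
    norm_num
  rw [hWv, ha23, hb23, hβv]
  have := burgersKey α s y hα0 hs0 hα3 (hβv ▸ hβ3)
  linarith [this]

lemma burgersW_cubic (y : ℝ) : (burgersW y) ^ 3 + burgersW y + y = 0 := by
  set s := Real.sqrt (1 / 27 + y ^ 2 / 4) with hsdef
  have hin : (0:ℝ) < 1 / 27 + y ^ 2 / 4 := by positivity
  have hs0 : 0 < s := Real.sqrt_pos.mpr hin
  have hs2 : s ^ 2 = 1 / 27 + y ^ 2 / 4 := Real.sq_sqrt hin.le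
  have ha : 0 < -(y / 2) + s := by nlinarith
  have hb : 0 < y / 2 + s := by nlinarith
  set α := (-(y / 2) + s) ^ ((1:ℝ)/3) with hαdef
  set β := (y / 2 + s) ^ ((1:ℝ)/3) with hβdef
  have hα3 : α ^ 3 = -(y / 2) + s := by
    rw [hαdef, ← Real.rpow_natCast ((-(y / 2) + s) ^ ((1:ℝ)/3)) 3, ← Real.rpow_mul ha.le]
    norm_num
  have hβ3 : β ^ 3 = y / 2 + s := by
    rw [hβdef, ← Real.rpow_natCast ((y / 2 + s) ^ ((1:ℝ)/3)) 3, ← Real.rpow_mul hb.le]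
    norm_num
  have hab : (-(y / 2) + s) * (y / 2 + s) = 1 / 27 := by nlinarith
  have hαβ : α * β = 1 / 3 := by
    rw [hαdef, hβdef, ← Real.mul_rpow ha.le hb.le, hab,
      show (1:ℝ)/27 = ((1:ℝ)/3) ^ (3:ℕ) by norm_num,
      ← Real.rpow_natCast ((1:ℝ)/3) 3, ← Real.rpow_mul (by norm_num)]
    norm_num
  have hWv : burgersW y = α - β := rfl
  rw [hWv]
  linear_combination hα3 - hβ3 - 3 * (α - β) * hαβ
set_option maxHeartbeats 1000000 in
/-- Away from the origin (`|y| ≥ 100`) the derivative of `W̄` satisfies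
`-(7/20)|y|^(-2/3) ≤ W̄'(y) ≤ -(1/4)|y|^(-2/3)`. -/
theorem burgersW_deriv_away_from_zero (y : ℝ) (hy : 100 ≤ |y|) :
    -(7 / 20) * |y| ^ (-(2 : ℝ) / 3) ≤ deriv burgersW y ∧
      deriv burgersW y ≤ -(1 / 4) * |y| ^ (-(2 : ℝ) / 3) := by
  have hy0 : (0:ℝ) < |y| := by linarith
  obtain ⟨W, hWdef⟩ : ∃ w, w = burgersW y := ⟨_, rfl⟩
  have hd : deriv burgersW y = -1 / (1 + 3 * W ^ 2) := by
    rw [hWdef]; exact (burgersW_hasDerivAt y).deriv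
  have hcubic : W ^ 3 + W + y = 0 := by rw [hWdef]; exact burgersW_cubic y
  obtain ⟨u, hudef⟩ : ∃ u, u = |W| := ⟨_, rfl⟩
  have hu0 : 0 ≤ u := hudef ▸ abs_nonneg _
  have hW2 : W ^ 2 = u ^ 2 := by rw [hudef, sq_abs]
  have hu3 : u ^ 3 + u = |y| := by
    rcases lt_trichotomy y 0 with h | h | h
    · have hWpos : 0 < W := by nlinarith
      rw [hudef, abs_of_pos hWpos, abs_of_neg h]; linarith
    · exact absurd hy (by simp [h])
    · have hWneg : W < 0 := by nlinarith
      rw [hudef, abs_of_neg hWneg, abs_of_pos h]; nlinarith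
  obtain ⟨r, hrdef⟩ : ∃ r, r = |y| ^ ((1:ℝ)/3) := ⟨_, rfl⟩
  have hr0 : 0 < r := hrdef ▸ Real.rpow_pos_of_pos hy0 _
  have hr3 : r ^ 3 = |y| := by
    rw [hrdef, ← Real.rpow_natCast (|y| ^ ((1:ℝ)/3)) 3, ← Real.rpow_mul (abs_nonneg y)]
    norm_num
  have hr4 : 4 ≤ r := by nlinarith [hr3, hr0, hy, sq_nonneg (r + 4), mul_pos hr0 hr0]
  have hu : u ^ 3 + u = r ^ 3 := by rw [hr3]; exact hu3
  have hrpow : |y| ^ (-(2:ℝ)/3) = (r ^ 2)⁻¹ := by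
    rw [hrdef, show (-(2:ℝ)/3) = ((1:ℝ)/3) * (2 : ℕ) * (-1) by push_cast; ring,
      Real.rpow_mul (abs_nonneg y), Real.rpow_mul (abs_nonneg y), Real.rpow_natCast,
      Real.rpow_neg_one]
  have hur : u ≤ r := by nlinarith [sq_nonneg (u - r), sq_nonneg (u + r)]
  have key1 : 1 + 3 * u ^ 2 ≤ 4 * r ^ 2 := by nlinarith
  have key2 : 20 * r ^ 2 ≤ 7 * (1 + 3 * u ^ 2) := by
    have hul : 2 * r ^ 2 - 1 ≤ 2 * r * u := by
      by_contra h
      push_neg at h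
      have hpos : (0:ℝ) ≤ 2 * r * u := by positivity
      have h1 : (2 * r * u) ^ 3 ≤ (2 * r ^ 2 - 1) ^ 3 := pow_le_pow_left₀ hpos h.le 3
      have h3 : 8 * r ^ 3 * (u ^ 3 + u) = 8 * r ^ 6 := by rw [hu]; ring
      nlinarith [h1, h3, mul_le_mul_of_nonneg_left h.le (by positivity : (0:ℝ) ≤ 4 * r ^ 2)]
    have hsq : (2 * r ^ 2 - 1) ^ 2 ≤ (2 * r * u) ^ 2 := pow_le_pow_left₀ (by nlinarith) hul 2
    nlinarith [hsq, sq_nonneg (r ^ 2 - 16), mul_pos hr0 hr0]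
  have hD : (0:ℝ) < 1 + 3 * u ^ 2 := by positivity
  rw [hd, hW2, hrpow]
  constructor
  · rw [show -(7/20) * (r ^ 2)⁻¹ = (-7) / (20 * r ^ 2) by field_simp,
      div_le_div_iff₀ (by positivity) hD]
    nlinarith [key2]
  · rw [show -(1/4) * (r ^ 2)⁻¹ = (-1) / (4 * r ^ 2) by field_simp,
      div_le_div_iff₀ hD (by positivity)]
    nlinarith [key1]
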